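/- For every multi-return macro tree transducer M, the translation membership problem for τ_{IO,M} is decidable: the characteristic function (s,t) ↦ (if (s,t) ∈ τ_{IO,M} then true else false) from T_Σ × T_Δ to Bool is computable. -/

import Mathlib

namespace MttF

/-- Finite ordered trees over a label type `α`. -/
inductive RTree (α : Type) : Type
  | node : α → List (RTree α) → RTree α

namespace RTree

variable {α β : Type}

/-- The root label of a tree. -/
def label : RTree α → α
  | node a _ => a

/-- The list of immediate subtrees of a tree. -/
def children : RTree α → List (RTree α)
  | node _ ts => ts

/-- Relabelling of trees. -/
def map (f : α → β) : RTree α → RTree β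
  | node a ts => node (f a) (ts.attach.map (fun x => map f x.1))
decreasing_by
  have := List.sizeOf_lt_of_mem x.2
  simp only [node.sizeOf_spec]
  omega

/-- A tree is well-formed with respect to a rank function if every node labeled
by a rank-`k` symbol has exactly `k` children. `T_Σ` is the set of well-formed
trees over `Σ`. -/
inductive Wf (rk : α → ℕ) : RTree α → Prop
  | node {a : α} {ts : List (RTree α)} :
      ts.length = rk a → (∀ t ∈ ts, Wf rk t) → Wf rk (node a ts)

/-- `Subtree u t` holds iff `u` is a subtree of `t` (rooted at some node of `t`). -/
inductive Subtree : RTree α → RTree α → Prop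
  | refl (t : RTree α) : Subtree t t
  | step {u c : RTree α} {a : α} {ts : List (RTree α)} :
      c ∈ ts → Subtree u c → Subtree u (node a ts)

end RTree

/-- Labels for output trees with parameters: trees over `Δ ∪ Y`. -/
inductive OLab (Δ : Type) : Type
  | out (d : Δ)
  | param (i : ℕ)

/-- Labels for right-hand sides of mtt rules: trees over `Δ ∪ (Q × X) ∪ Y`
(the second component of a call is the index of the input variable `x`). -/
inductive RLab (Δ Q : Type) : Type
  | out (d : Δ)
  | call (q : Q) (x : ℕ)
  | param (i : ℕ)

/-- Labels for "semantic" trees over `Δ ∪ (Q × T_Σ) ∪ Y`. -/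
inductive SLab (Γ Δ Q : Type) : Type
  | out (d : Δ)
  | call (q : Q) (s : RTree Γ)
  | param (i : ℕ)

/-- Trees over `Δ ∪ Y`. -/
abbrev OT (Δ : Type) := RTree (OLab Δ)
/-- Right-hand side trees over `Δ ∪ (Q × X) ∪ Y`. -/
abbrev Rhs (Δ Q : Type) := RTree (RLab Δ Q)
/-- Trees over `Δ ∪ (Q × T_Σ) ∪ Y`. -/
abbrev ST (Γ Δ Q : Type) := RTree (SLab Γ Δ Q)

/-- First-order substitution `x_i := ss_i` on a label of a right-hand side
(indices are 0-based; for well-formed rules the index is always in range). -/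
def RLab.subst {Γ Δ Q : Type} (ss : List (RTree Γ)) : RLab Δ Q → SLab Γ Δ Q
  | .out d => .out d
  | .param i => .param i
  | .call q x =>
    match ss[x]? with
    | some s => .call q s
    | none => .param x

/-- `r[x_1/s_1, …, x_k/s_k]`. -/
def substX {Γ Δ Q : Type} (ss : List (RTree Γ)) (r : Rhs Δ Q) : ST Γ Δ Q :=
  r.map (RLab.subst ss)

/-- Second-order (parameter) substitution `t[y_1/ts_1, …, y_n/ts_n]`
(`y` indices are 0-based). -/
def substY {Δ : Type} (ts : List (OT Δ)) : OT Δ → OT Δ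
  | .node (.param i) _ => ts.getD i (.node (.param i) [])
  | .node (.out d) us => .node (.out d) (us.attach.map (fun x => substY ts x.1))
decreasing_by
  have := List.sizeOf_lt_of_mem x.2
  simp only [RTree.node.sizeOf_spec]
  omega

/-- The embedding of `T_Δ` into the trees over `Δ ∪ Y`. -/
def embed {Δ : Type} (t : RTree Δ) : OT Δ := t.map OLab.out

variable {Γ Δ Q : Type}

/-- IO (call-by-value, inside-out) semantics: `SemIO rsel u t` holds iff
`t ∈ ⟦u⟧_IO`.  The rules of the transducer are given by a selector
`rsel q σ ss`: the set of right-hand sides of the `⟨q,σ⟩`-rules that are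
applicable when the children of the current input node are `ss` (for a plain
mtt this does not depend on `ss`, cf. `plainSel`). -/
inductive SemIO (rsel : Q → Γ → List (RTree Γ) → Set (Rhs Δ Q)) :
    ST Γ Δ Q → OT Δ → Prop
  | param (i : ℕ) :
      SemIO rsel (.node (.param i) []) (.node (.param i) [])
  | out {d : Δ} {us : List (ST Γ Δ Q)} {ts : List (OT Δ)}
      (hlen : ts.length = us.length)
      (h : ∀ i : Fin us.length, SemIO rsel (us.get i) (ts.get (i.cast hlen.symm))) :
      SemIO rsel (.node (.out d) us) (.node (.out d) ts)
  | call {q : Q} {σ : Γ} {ss : List (RTree Γ)} {us : List (ST Γ Δ Q)}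
      {r : Rhs Δ Q} {t₀ : OT Δ} {ts : List (OT Δ)}
      (hr : r ∈ rsel q σ ss)
      (h₀ : SemIO rsel (substX ss r) t₀)
      (hlen : ts.length = us.length)
      (h : ∀ i : Fin us.length, SemIO rsel (us.get i) (ts.get (i.cast hlen.symm))) :
      SemIO rsel (.node (.call q (.node σ ss)) us) (substY ts t₀)

mutual
/-- OI (call-by-name, outside-in) semantics: `SemOI rsel u t` holds iff
`t ∈ ⟦u⟧_OI`. -/
inductive SemOI (rsel : Q → Γ → List (RTree Γ) → Set (Rhs Δ Q)) :
    ST Γ Δ Q → OT Δ → Prop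
  | param (i : ℕ) :
      SemOI rsel (.node (.param i) []) (.node (.param i) [])
  | out {d : Δ} {us : List (ST Γ Δ Q)} {ts : List (OT Δ)}
      (hlen : ts.length = us.length)
      (h : ∀ i : Fin us.length, SemOI rsel (us.get i) (ts.get (i.cast hlen.symm))) :
      SemOI rsel (.node (.out d) us) (.node (.out d) ts)
  | call {q : Q} {σ : Γ} {ss : List (RTree Γ)} {us : List (ST Γ Δ Q)}
      {r : Rhs Δ Q} {t₀ : OT Δ} {t : OT Δ}
      (hr : r ∈ rsel q σ ss)
      (h₀ : SemOI rsel (substX ss r) t₀)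
      (hs : OISub rsel us t₀ t) :
      SemOI rsel (.node (.call q (.node σ ss)) us) t

/-- OI-substitution: `OISub rsel us t₀ t` holds iff `t ∈ (t₀ ←_OI (⟦us_1⟧_OI, …, ⟦us_n⟧_OI))`,
i.e. `t` is obtained from `t₀` by independently replacing every occurrence of a parameter
`y_i` by some member of `⟦us_i⟧_OI`. -/
inductive OISub (rsel : Q → Γ → List (RTree Γ) → Set (Rhs Δ Q)) :
    List (ST Γ Δ Q) → OT Δ → OT Δ → Prop
  | param {us : List (ST Γ Δ Q)} {i : ℕ} {t : OT Δ}
      (h : i < us.length) (hsem : SemOI rsel (us.get ⟨i, h⟩) t) :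
      OISub rsel us (.node (.param i) []) t
  | out {us : List (ST Γ Δ Q)} {d : Δ} {ts ts' : List (OT Δ)}
      (hlen : ts'.length = ts.length)
      (h : ∀ i : Fin ts.length, OISub rsel us (ts.get i) (ts'.get (i.cast hlen.symm))) :
      OISub rsel us (.node (.out d) ts) (.node (.out d) ts')
end

/-- The rule selector of a plain mtt: the applicable rules do not depend on the
child subtrees of the current input node. -/
def plainSel (rules : Q → Γ → Set (Rhs Δ Q)) :
    Q → Γ → List (RTree Γ) → Set (Rhs Δ Q) :=
  fun q σ _ => rules q σ

/-- The translation `τ_{IO,M} ⊆ T_Σ × T_Δ` realized in IO mode. -/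
def tauIO (rankΓ : Γ → ℕ) (rankΔ : Δ → ℕ)
    (rsel : Q → Γ → List (RTree Γ) → Set (Rhs Δ Q)) (q₀ : Q) :
    Set (RTree Γ × RTree Δ) :=
  {p | p.1.Wf rankΓ ∧ p.2.Wf rankΔ ∧
       SemIO rsel (.node (.call q₀ p.1) []) (embed p.2)}

/-- The translation `τ_{OI,M} ⊆ T_Σ × T_Δ` realized in OI mode. -/
def tauOI (rankΓ : Γ → ℕ) (rankΔ : Δ → ℕ)
    (rsel : Q → Γ → List (RTree Γ) → Set (Rhs Δ Q)) (q₀ : Q) :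
    Set (RTree Γ × RTree Δ) :=
  {p | p.1.Wf rankΓ ∧ p.2.Wf rankΔ ∧
       SemOI rsel (.node (.call q₀ p.1) []) (embed p.2)}

/-- Well-formedness of a right-hand side of a rule of an mtt whose current
input symbol has rank `k` and whose current state has rank `m`: output symbols
have the correct number of children, state calls `⟨q', x_i⟩` have `rank q'`
children and `i < k`, and parameters `y_j` satisfy `j < m`. -/
inductive RhsWf (rankΔ : Δ → ℕ) (rankQ : Q → ℕ) (k m : ℕ) : Rhs Δ Q → Prop
  | out {d : Δ} {ts : List (Rhs Δ Q)}
      (hlen : ts.length = rankΔ d) (h : ∀ t ∈ ts, RhsWf rankΔ rankQ k m t) :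
      RhsWf rankΔ rankQ k m (.node (.out d) ts)
  | call {q : Q} {x : ℕ} {ts : List (Rhs Δ Q)}
      (hx : x < k) (hlen : ts.length = rankQ q)
      (h : ∀ t ∈ ts, RhsWf rankΔ rankQ k m t) :
      RhsWf rankΔ rankQ k m (.node (.call q x) ts)
  | param {i : ℕ} (hi : i < m) : RhsWf rankΔ rankQ k m (.node (.param i) [])

/-- Well-formedness of a tree over `Δ ∪ (Q × T_Σ) ∪ Y`. -/
inductive STWf (rankΓ : Γ → ℕ) (rankΔ : Δ → ℕ) (rankQ : Q → ℕ) : ST Γ Δ Q → Prop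
  | out {d : Δ} {ts : List (ST Γ Δ Q)}
      (hlen : ts.length = rankΔ d) (h : ∀ t ∈ ts, STWf rankΓ rankΔ rankQ t) :
      STWf rankΓ rankΔ rankQ (.node (.out d) ts)
  | call {q : Q} {s : RTree Γ} {ts : List (ST Γ Δ Q)}
      (hs : s.Wf rankΓ) (hlen : ts.length = rankQ q)
      (h : ∀ t ∈ ts, STWf rankΓ rankΔ rankQ t) :
      STWf rankΓ rankΔ rankQ (.node (.call q s) ts)
  | param (i : ℕ) : STWf rankΓ rankΔ rankQ (.node (.param i) [])

/-- A tree over `Δ ∪ (Q × T_Σ) ∪ Y` is parameter-free if no `y_i` occurs in it. -/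
inductive NoParam : ST Γ Δ Q → Prop
  | node {l : SLab Γ Δ Q} {ts : List (ST Γ Δ Q)}
      (hl : ∀ i : ℕ, l ≠ .param i) (h : ∀ t ∈ ts, NoParam t) :
      NoParam (.node l ts)

/-- A macro tree transducer `M = (Q, Σ, Δ, q₀, R)`.  The alphabets `Γ` (input),
`Δ` (output) and the set `Q` of states are ranked; `q₀` has rank `0`; `rules q σ`
is the (finite) set `R_{q,σ}` of right-hand sides of the `⟨q,σ⟩`-rules, and every
right-hand side is a well-formed tree over `Δ ∪ (Q × X_k) ∪ Y_m`. -/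
structure MTT (Γ Δ Q : Type) where
  rankΓ : Γ → ℕ
  rankΔ : Δ → ℕ
  rankQ : Q → ℕ
  q₀ : Q
  q₀_rank : rankQ q₀ = 0
  rules : Q → Γ → Set (Rhs Δ Q)
  rules_fin : ∀ q σ, (rules q σ).Finite
  rules_wf : ∀ q σ, ∀ r ∈ rules q σ, RhsWf rankΔ rankQ (rankΓ σ) (rankQ q) r

/-- The rule selector of a plain mtt. -/
def MTT.sel (M : MTT Γ Δ Q) : Q → Γ → List (RTree Γ) → Set (Rhs Δ Q) :=
  plainSel M.rules

end MttF
namespace MttF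

/-- Labels for the trees over `Δ ∪ Y ∪ Z` occurring in the right-hand sides of
rules of multi-return mtts: output symbols, parameters `y_i`, and let-variables
`z_i` (all indices 0-based). -/
inductive MLab (Δ : Type) : Type
  | out (d : Δ)
  | param (i : ℕ)
  | lvar (i : ℕ)

/-- Trees over `Δ ∪ Y ∪ Z`. -/
abbrev MT (Δ : Type) := RTree (MLab Δ)

/-- A right-hand side of a rule of a multi-return mtt: a sequence of
let-bindings `let (z_j,…,z_{j+D(q')-1}) = ⟨q', x_i⟩(u_1,…,u_n) in …` followed by
a final tuple `(w_1,…,w_e)`. -/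
inductive MRhs (Δ Q : Type) : Type
  | ret (ws : List (MT Δ))
  | lett (j : ℕ) (q : Q) (x : ℕ) (us : List (MT Δ)) (rest : MRhs Δ Q)

/-- Substitution of the parameters: `w[y_1/us_1, …, y_n/us_n]`. -/
def substYM {Δ : Type} (us : List (MT Δ)) : MT Δ → MT Δ
  | .node (.param i) _ => us.getD i (.node (.param i) [])
  | .node (.lvar i) _ => .node (.lvar i) []
  | .node (.out d) ts => .node (.out d) (ts.attach.map (fun x => substYM us x.1))
decreasing_by
  have := List.sizeOf_lt_of_mem x.2
  simp only [RTree.node.sizeOf_spec]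
  omega

/-- Substitution of the let-variables `z_j, …, z_{j+d-1}` bound by a `let`:
`ξ[z_j/zs_1, …, z_{j+d-1}/zs_d]`. -/
def substZ {Δ : Type} (j : ℕ) (zs : List (MT Δ)) : MT Δ → MT Δ
  | .node (.lvar i) _ =>
      if j ≤ i ∧ i < j + zs.length then zs.getD (i - j) (.node (.lvar i) [])
      else .node (.lvar i) []
  | .node (.param i) _ => .node (.param i) []
  | .node (.out d) ts => .node (.out d) (ts.attach.map (fun x => substZ j zs x.1))
decreasing_by
  have := List.sizeOf_lt_of_mem x.2
  simp only [RTree.node.sizeOf_spec]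
  omega

/-- The IO-semantics of multi-return mtts: `SemMR D rules env κ ξ` holds iff
`ξ ∈ ⟦κ[x_1/env_1, …, x_k/env_k]⟧_IO` (the substitution of the input variables
is performed lazily via the environment `env`).  Since the semantics of a tree
over `Δ ∪ Y ∪ Z` is the singleton of that tree, a final tuple evaluates to
itself; a `let` evaluates the state call on the input subtree `env_x` with the
argument trees substituted for the parameters (IO-substitution), and
substitutes the resulting tuple for the bound `z`-variables in the value of the
body. -/
inductive SemMR {Γ Δ Q : Type} (D : Q → ℕ) (rules : Q → Γ → Set (MRhs Δ Q)) :
    List (RTree Γ) → MRhs Δ Q → List (MT Δ) → Prop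
  | ret {env : List (RTree Γ)} {ws : List (MT Δ)} :
      SemMR D rules env (.ret ws) ws
  | lett {env : List (RTree Γ)} {j : ℕ} {q : Q} {x : ℕ} {us : List (MT Δ)}
      {rest : MRhs Δ Q} {σ : Γ} {ss : List (RTree Γ)} {r : MRhs Δ Q}
      {ws ξs : List (MT Δ)}
      (hx : env[x]? = some (.node σ ss))
      (hr : r ∈ rules q σ)
      (hws : SemMR D rules ss r ws)
      (hξ : SemMR D rules env rest ξs) :
      SemMR D rules env (.lett j q x us rest)
        (ξs.map (substZ j (ws.map (substYM us))))

/-- The embedding of `T_Δ` into the trees over `Δ ∪ Y ∪ Z`. -/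
def embedM {Δ : Type} (t : RTree Δ) : MT Δ := t.map MLab.out

/-- The translation `τ_{IO,M} = {(s,t) | t ∈ ⟦let z = ⟨q0,s⟩() in z⟧_IO}`
realized by a multi-return mtt. -/
def tauMR {Γ Δ Q : Type} (rankΓ : Γ → ℕ) (rankΔ : Δ → ℕ) (D : Q → ℕ)
    (rules : Q → Γ → Set (MRhs Δ Q)) (q₀ : Q) : Set (RTree Γ × RTree Δ) :=
  {p | p.1.Wf rankΓ ∧ p.2.Wf rankΔ ∧
    SemMR D rules [p.1] (.lett 0 q₀ 0 [] (.ret [.node (.lvar 0) []]))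
      [embedM p.2]}

end MttF
namespace MttF

/-- A fixed effective encoding of lists of naturals. -/
def encodeList : List ℕ → ℕ
  | [] => 0
  | x :: xs => Nat.pair x (encodeList xs) + 1

/-- A fixed effective encoding of trees into `ℕ`, given an encoding of the labels. -/
def encodeTree {α : Type} (encL : α → ℕ) : RTree α → ℕ
  | .node a ts =>
      Nat.pair (encL a) (encodeList (ts.attach.map (fun x => encodeTree encL x.1)))
decreasing_by
  have := List.sizeOf_lt_of_mem x.2
  simp only [RTree.node.sizeOf_spec]
  omega

end MttF

namespace MttF

/-- Well-formedness of a tree over `Δ ∪ Y_m ∪ Z` in which exactly the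
let-variables with indices in `Z` are in scope. -/
inductive MTWf {Δ : Type} (rankΔ : Δ → ℕ) (m : ℕ) (Z : Set ℕ) : MT Δ → Prop
  | out {d : Δ} {ts : List (MT Δ)}
      (hlen : ts.length = rankΔ d) (h : ∀ u ∈ ts, MTWf rankΔ m Z u) :
      MTWf rankΔ m Z (.node (.out d) ts)
  | param {i : ℕ} (hi : i < m) : MTWf rankΔ m Z (.node (.param i) [])
  | lvar {i : ℕ} (hi : i ∈ Z) : MTWf rankΔ m Z (.node (.lvar i) [])

/-- Well-formedness of a right-hand side of a rule of a multi-return mtt for an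
input symbol of rank `k`, a state of rank `m` and dimension `e`, with the
let-variables in `Z` already bound: every `let` binds `D q'` fresh variables,
passes `rank q'` argument trees that only use variables in scope, and the final
tuple has exactly `e` components. -/
inductive MRhsWf {Δ Q : Type} (rankΔ : Δ → ℕ) (rankQ : Q → ℕ) (D : Q → ℕ)
    (k m e : ℕ) : Set ℕ → MRhs Δ Q → Prop
  | ret {Z : Set ℕ} {ws : List (MT Δ)}
      (hlen : ws.length = e) (h : ∀ w ∈ ws, MTWf rankΔ m Z w) :
      MRhsWf rankΔ rankQ D k m e Z (.ret ws)
  | lett {Z : Set ℕ} {j : ℕ} {q : Q} {x : ℕ} {us : List (MT Δ)} {rest : MRhs Δ Q}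
      (hx : x < k) (hus : us.length = rankQ q)
      (h : ∀ u ∈ us, MTWf rankΔ m Z u)
      (hfresh : ∀ i < D q, j + i ∉ Z)
      (hrest : MRhsWf rankΔ rankQ D k m e (Z ∪ {i' | ∃ i < D q, i' = j + i}) rest) :
      MRhsWf rankΔ rankQ D k m e Z (.lett j q x us rest)

/-- A multi-return macro tree transducer `M = (Q,Σ,Δ,q0,R,D)`. -/
structure MRMTT (Γ Δ Q : Type) where
  rankΓ : Γ → ℕ
  rankΔ : Δ → ℕ
  rankQ : Q → ℕ
  dim : Q → ℕ
  q₀ : Q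
  q₀_rank : rankQ q₀ = 0
  q₀_dim : dim q₀ = 1
  rules : Q → Γ → Set (MRhs Δ Q)
  rules_fin : ∀ q σ, (rules q σ).Finite
  rules_wf : ∀ q σ, ∀ r ∈ rules q σ,
      MRhsWf rankΔ rankQ dim (rankΓ σ) (rankQ q) (dim q) ∅ r

/-! ### Auxiliary material for the proof -/

section Aux0

namespace RTree

/-- Custom induction principle for `RTree`. -/
theorem ind {α : Type} {motive : RTree α → Prop}
    (h : ∀ (a : α) (ts : List (RTree α)), (∀ t ∈ ts, motive t) → motive (.node a ts)) :
    ∀ t, motive t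
  | .node a ts => h a ts (fun t ht => ind h t)
decreasing_by
  have := List.sizeOf_lt_of_mem ht
  simp only [node.sizeOf_spec]; omega

theorem map_node {α β : Type} (f : α → β) (a : α) (ts : List (RTree α)) :
    RTree.map f (.node a ts) = .node (f a) (ts.map (RTree.map f)) := by
  rw [RTree.map]
  congr 1
  exact List.attach_map_val (l := ts)

end RTree

theorem encodeTree_node {α : Type} (encL : α → ℕ) (a : α) (ts : List (RTree α)) :
    encodeTree encL (.node a ts) =
      Nat.pair (encL a) (encodeList (ts.map (encodeTree encL))) := by
  rw [encodeTree]
  congr 1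
  exact congrArg _ (List.attach_map_val (l := ts))

theorem substYM_out {Δ : Type} (us : List (MT Δ)) (d : Δ) (ts : List (MT Δ)) :
    substYM us (.node (.out d) ts) = .node (.out d) (ts.map (substYM us)) := by
  rw [substYM]
  exact congrArg _ (List.attach_map_val (l := ts))

theorem substZ_out {Δ : Type} (j : ℕ) (zs : List (MT Δ)) (d : Δ) (ts : List (MT Δ)) :
    substZ j zs (.node (.out d) ts) = .node (.out d) (ts.map (substZ j zs)) := by
  rw [substZ]
  exact congrArg _ (List.attach_map_val (l := ts))

theorem encodeList_injective : Function.Injective encodeList := by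
  intro l₁
  induction l₁ with
  | nil => intro l₂ h; cases l₂ with
    | nil => rfl
    | cons x xs => simp [encodeList] at h
  | cons x xs ih =>
    intro l₂ h
    cases l₂ with
    | nil => simp [encodeList] at h
    | cons y ys =>
      simp only [encodeList, Nat.add_right_cancel_iff] at h
      obtain ⟨h1, h2⟩ := Nat.pair_eq_pair.1 h
      rw [h1, ih h2]

theorem encodeTree_injective {α : Type} {encL : α → ℕ} (h : Function.Injective encL) :
    Function.Injective (encodeTree encL) := by
  intro t
  induction t using RTree.ind with
  | h a ts ih =>
    intro u he
    cases u with
    | node b us =>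
      rw [encodeTree_node, encodeTree_node] at he
      obtain ⟨h1, h2⟩ := Nat.pair_eq_pair.1 he
      have h2' := encodeList_injective h2
      cases h h1
      congr 1
      clear he h1 h2
      induction ts generalizing us with
      | nil => cases us with
        | nil => rfl
        | cons => simp at h2'
      | cons t ts iht =>
        cases us with
        | nil => simp at h2'
        | cons u us =>
          simp only [List.map_cons, List.cons.injEq] at h2'
          have := ih t (by simp) h2'.1
          rw [this, iht (fun v hv => ih v (by simp [hv])) us h2'.2]

/-- Decoding of `encodeList`. -/
def decList : ℕ → List ℕ
  | 0 => []
  | n + 1 => (Nat.unpair n).1 :: decList (Nat.unpair n).2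
decreasing_by
  exact Nat.lt_succ_of_le (Nat.unpair_right_le n)

theorem decList_encodeList (l : List ℕ) : decList (encodeList l) = l := by
  induction l with
  | nil => rw [show encodeList [] = 0 from rfl, decList]
  | cons x xs ih =>
    show decList (Nat.pair x (encodeList xs) + 1) = _
    rw [decList, Nat.unpair_pair, ih]

theorem decList_lt : ∀ n, ∀ c ∈ decList n, c < n := by
  intro n
  induction n using Nat.strong_induction_on with
  | _ n ih =>
    cases n with
    | zero => intro c hc; simp [decList] at hc
    | succ m =>
      intro c hc
      rw [decList, List.mem_cons] at hc
      rcases hc with hc | hc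
      · exact Nat.lt_succ_of_le (hc ▸ Nat.unpair_left_le m)
      · exact lt_trans (ih _ (Nat.lt_succ_of_le (Nat.unpair_right_le m)) c hc)
          (Nat.lt_succ_of_le (Nat.unpair_right_le m))

/-- Course-of-values recursion along the tree-code structure. -/
def cov {σ : Type} (step : ℕ → List σ → σ) (n : ℕ) : σ :=
  step n ((decList (Nat.unpair n).2).attach.map (fun c => cov step c.1))
termination_by n
decreasing_by
  exact lt_of_lt_of_le (decList_lt _ _ c.2) (Nat.unpair_right_le n)

theorem cov_eq {σ : Type} (step : ℕ → List σ → σ) (n : ℕ) :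
    cov step n = step n ((decList (Nat.unpair n).2).map (cov step)) := by
  rw [cov]
  exact congrArg _ List.attach_map_val

theorem foldr_or_eq_true (l : List Bool) :
    l.foldr (· || ·) false = true ↔ ∃ b ∈ l, b = true := by
  induction l with
  | nil => simp
  | cons x xs ih => simp [ih]

theorem foldr_and_eq_true (l : List Bool) :
    l.foldr (· && ·) true = true ↔ ∀ b ∈ l, b = true := by
  induction l with
  | nil => simp
  | cons x xs ih => simp [ih]

theorem getD_map_range {σ : Type} (f : ℕ → σ) (n c : ℕ) (hc : c < n) (d : σ) :
    ((List.range n).map f).getD c d = f c := by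
  rw [List.getD_eq_getElem?_getD]
  simp [List.getElem?_map, List.getElem?_range hc]

end Aux0

section Aux1

open Primrec

theorem decList_primrec : Primrec decList := by
  have h2 : Primrec₂ (fun (_ : Unit) (n : ℕ) => decList n) := by
    apply Primrec.nat_strong_rec _ (g := fun (_ : Unit) (l : List (List ℕ)) =>
      some (if l.length = 0 then ([] : List ℕ)
        else (Nat.unpair (l.length - 1)).1 :: l.getD (Nat.unpair (l.length - 1)).2 []))
    · apply Primrec.option_some.comp
      have hlen : Primrec (fun p : Unit × List (List ℕ) => p.2.length) :=
        Primrec.list_length.comp Primrec.snd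
      have hm : Primrec (fun p : Unit × List (List ℕ) => p.2.length - 1) :=
        Primrec.nat_sub.comp hlen (Primrec.const 1)
      apply Primrec.ite (Primrec.eq.comp hlen (Primrec.const 0)) (Primrec.const [])
      exact Primrec.list_cons.comp
        (Primrec.fst.comp (Primrec.unpair.comp hm))
        ((Primrec.list_getD []).comp Primrec.snd
          (Primrec.snd.comp (Primrec.unpair.comp hm)))
    · intro _ n
      cases n with
      | zero => simp [decList]
      | succ m =>
        have hlen : ((List.range (m + 1)).map decList).length = m + 1 := by simp
        simp only [hlen, Nat.add_sub_cancel, Nat.succ_ne_zero, if_false]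
        rw [getD_map_range _ _ _ (Nat.lt_succ_of_le (Nat.unpair_right_le m)), decList]
  exact h2.comp (Primrec.const ()) Primrec.id

theorem cov_primrec {α σ : Type} [Primcodable α] [Primcodable σ] [Inhabited σ]
    (step : α → ℕ → List σ → σ)
    (hstep : Primrec fun p : α × ℕ × List σ => step p.1 p.2.1 p.2.2) :
    Primrec₂ fun a n => cov (step a) n := by
  apply Primrec.nat_strong_rec _ (g := fun (a : α) (l : List σ) =>
    some (step a l.length ((decList (Nat.unpair l.length).2).map (fun c => l.getD c default))))
  · apply Primrec.option_some.comp
    have hlen : Primrec (fun p : α × List σ => p.2.length) :=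
      Primrec.list_length.comp Primrec.snd
    have hdl : Primrec (fun p : α × List σ => decList (Nat.unpair p.2.length).2) :=
      decList_primrec.comp (Primrec.snd.comp (Primrec.unpair.comp hlen))
    have hcs : Primrec (fun p : α × List σ =>
        (decList (Nat.unpair p.2.length).2).map (fun c => p.2.getD c default)) :=
      Primrec.list_map hdl
        (((Primrec.list_getD default).comp (Primrec.snd.comp Primrec.fst) Primrec.snd).to₂)
    exact hstep.comp (Primrec.pair Primrec.fst (Primrec.pair hlen hcs))
  · intro a n
    have hlen : ((List.range n).map (cov (step a))).length = n := by simp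
    rw [hlen]
    congr 1
    rw [cov_eq]
    congr 1
    apply List.map_congr_left
    intro c hc
    have hc' : c < n := lt_of_lt_of_le (decList_lt _ _ hc) (Nat.unpair_right_le n)
    exact getD_map_range _ _ _ hc' _

theorem encodeList_primrec : Primrec encodeList := by
  have : Primrec (fun l : List ℕ => l.foldr (fun x r => Nat.pair x r + 1) 0) :=
    Primrec.list_foldr Primrec.id (Primrec.const 0)
      ((Primrec.succ.comp
        (Primrec₂.natPair.comp (Primrec.fst.comp Primrec.snd)
          (Primrec.snd.comp Primrec.snd))).to₂)
  apply this.of_eq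
  intro l
  induction l with
  | nil => rfl
  | cons x xs ih => simp [encodeList, ih]

end Aux1

section Aux2

/-- Step function for code-level parameter substitution. -/
def stepY (us : List ℕ) (n : ℕ) (cs : List ℕ) : ℕ :=
  if (Nat.unpair n).1 % 3 = 0 then Nat.pair (Nat.unpair n).1 (encodeList cs)
  else if (Nat.unpair n).1 % 3 = 1 then
    us.getD ((Nat.unpair n).1 / 3) (Nat.pair (Nat.unpair n).1 0)
  else Nat.pair (Nat.unpair n).1 0

/-- Code-level parameter substitution. -/
def substYC (us : List ℕ) : ℕ → ℕ := cov (stepY us)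

/-- Step function for code-level let-variable substitution. -/
def stepZ (j : ℕ) (zs : List ℕ) (n : ℕ) (cs : List ℕ) : ℕ :=
  if (Nat.unpair n).1 % 3 = 0 then Nat.pair (Nat.unpair n).1 (encodeList cs)
  else if (Nat.unpair n).1 % 3 = 1 then Nat.pair (Nat.unpair n).1 0
  else if j ≤ (Nat.unpair n).1 / 3 ∧ (Nat.unpair n).1 / 3 < j + zs.length then
    zs.getD ((Nat.unpair n).1 / 3 - j) (Nat.pair (Nat.unpair n).1 0)
  else Nat.pair (Nat.unpair n).1 0

/-- Code-level let-variable substitution. -/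
def substZC (j : ℕ) (zs : List ℕ) : ℕ → ℕ := cov (stepZ j zs)

/-- Step function for label tripling. -/
def step3 (n : ℕ) (cs : List ℕ) : ℕ := Nat.pair (3 * (Nat.unpair n).1) (encodeList cs)

/-- Code-level relabelling multiplying every label by `3`. -/
def recode3 : ℕ → ℕ := cov step3

theorem substYC_primrec : Primrec₂ substYC := by
  apply cov_primrec stepY
  have hl : Primrec (fun p : List ℕ × ℕ × List ℕ => (Nat.unpair p.2.1).1) :=
    Primrec.fst.comp (Primrec.unpair.comp (Primrec.fst.comp Primrec.snd))
  have hmod : Primrec (fun p : List ℕ × ℕ × List ℕ => (Nat.unpair p.2.1).1 % 3) :=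
    Primrec.nat_mod.comp hl (Primrec.const 3)
  have hdf : Primrec (fun p : List ℕ × ℕ × List ℕ => Nat.pair (Nat.unpair p.2.1).1 0) :=
    Primrec₂.natPair.comp hl (Primrec.const 0)
  apply Primrec.ite (Primrec.eq.comp hmod (Primrec.const 0))
    (Primrec₂.natPair.comp hl (encodeList_primrec.comp (Primrec.snd.comp Primrec.snd)))
  apply Primrec.ite (Primrec.eq.comp hmod (Primrec.const 1)) _ hdf
  exact Primrec.option_getD.comp
    (Primrec.list_getElem?.comp Primrec.fst (Primrec.nat_div.comp hl (Primrec.const 3))) hdf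

theorem substZC_primrec : Primrec₂ (fun (p : ℕ × List ℕ) (n : ℕ) => substZC p.1 p.2 n) := by
  apply cov_primrec (fun (p : ℕ × List ℕ) => stepZ p.1 p.2)
  have hl : Primrec (fun p : (ℕ × List ℕ) × ℕ × List ℕ => (Nat.unpair p.2.1).1) :=
    Primrec.fst.comp (Primrec.unpair.comp (Primrec.fst.comp Primrec.snd))
  have hmod : Primrec (fun p : (ℕ × List ℕ) × ℕ × List ℕ => (Nat.unpair p.2.1).1 % 3) :=
    Primrec.nat_mod.comp hl (Primrec.const 3)
  have hdiv : Primrec (fun p : (ℕ × List ℕ) × ℕ × List ℕ => (Nat.unpair p.2.1).1 / 3) :=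
    Primrec.nat_div.comp hl (Primrec.const 3)
  have hj : Primrec (fun p : (ℕ × List ℕ) × ℕ × List ℕ => p.1.1) :=
    Primrec.fst.comp Primrec.fst
  have hzs : Primrec (fun p : (ℕ × List ℕ) × ℕ × List ℕ => p.1.2) :=
    Primrec.snd.comp Primrec.fst
  have hdf : Primrec (fun p : (ℕ × List ℕ) × ℕ × List ℕ => Nat.pair (Nat.unpair p.2.1).1 0) :=
    Primrec₂.natPair.comp hl (Primrec.const 0)
  apply Primrec.ite (Primrec.eq.comp hmod (Primrec.const 0))
    (Primrec₂.natPair.comp hl (encodeList_primrec.comp (Primrec.snd.comp Primrec.snd)))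
  apply Primrec.ite (Primrec.eq.comp hmod (Primrec.const 1)) hdf
  apply Primrec.ite (PrimrecPred.and (Primrec.nat_le.comp hj hdiv)
    (Primrec.nat_lt.comp hdiv (Primrec.nat_add.comp hj (Primrec.list_length.comp hzs)))) _ hdf
  exact Primrec.option_getD.comp
    (Primrec.list_getElem?.comp hzs (Primrec.nat_sub.comp hdiv hj)) hdf

theorem recode3_primrec : Primrec recode3 := by
  have h : Primrec₂ (fun (_ : Unit) (n : ℕ) => cov step3 n) := by
    apply cov_primrec (fun (_ : Unit) => step3)
    exact Primrec₂.natPair.comp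
      (Primrec.nat_mul.comp (Primrec.const 3)
        (Primrec.fst.comp (Primrec.unpair.comp (Primrec.fst.comp Primrec.snd))))
      (encodeList_primrec.comp (Primrec.snd.comp Primrec.snd))
  exact h.comp (Primrec.const ()) Primrec.id

variable {Δ : Type} [Encodable Δ]

/-- Our choice of label encoding for trees over `Δ ∪ Y ∪ Z`. -/
def encM : MLab Δ → ℕ
  | .out d => 3 * Encodable.encode d
  | .param i => 3 * i + 1
  | .lvar i => 3 * i + 2

theorem encM_injective : Function.Injective (encM (Δ := Δ)) := by
  intro a b h
  cases a <;> cases b <;> simp only [encM] at h <;> first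
    | (exfalso; omega)
    | (congr 1; omega)
    | (congr 1; exact Encodable.encode_injective (by omega))

/-- The code of a tree over `Δ ∪ Y ∪ Z`. -/
def codeMT : MT Δ → ℕ := encodeTree encM

theorem codeMT_injective : Function.Injective (codeMT (Δ := Δ)) :=
  encodeTree_injective encM_injective

theorem codeMT_out (d : Δ) (ts : List (MT Δ)) :
    codeMT (.node (.out d) ts) =
      Nat.pair (3 * Encodable.encode d) (encodeList (ts.map codeMT)) := by
  rw [codeMT, encodeTree_node]; rfl

theorem codeMT_param (i : ℕ) (ts : List (MT Δ)) :
    codeMT (.node (.param i) ts) = Nat.pair (3 * i + 1) (encodeList (ts.map codeMT)) := by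
  rw [codeMT, encodeTree_node]; rfl

theorem codeMT_lvar (i : ℕ) (ts : List (MT Δ)) :
    codeMT (.node (.lvar i) ts) = Nat.pair (3 * i + 2) (encodeList (ts.map codeMT)) := by
  rw [codeMT, encodeTree_node]; rfl

theorem substYC_codeMT (us : List (MT Δ)) (w : MT Δ) :
    substYC (us.map codeMT) (codeMT w) = codeMT (substYM us w) := by
  induction w using RTree.ind with
  | h a ts ih =>
    cases a with
    | out d =>
      rw [substYM_out, substYC, cov_eq, codeMT_out, codeMT_out]
      simp only [stepY, Nat.unpair_pair]
      rw [if_pos (by omega)]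
      congr 1
      rw [decList_encodeList, List.map_map, List.map_map]
      exact congrArg encodeList (List.map_congr_left fun t h => ih t h)
    | param i =>
      have hsub : substYM us (RTree.node (MLab.param i) ts) = us.getD i (.node (.param i) []) := by
        rw [substYM]
      rw [hsub, substYC, cov_eq, codeMT_param]
      simp only [stepY, Nat.unpair_pair]
      rw [if_neg (by omega), if_pos (by omega)]
      have hd : (3 * i + 1) / 3 = i := by omega
      rw [hd]
      have : Nat.pair (3 * i + 1) 0 = codeMT (.node (.param i) ([] : List (MT Δ))) := by
        rw [codeMT_param]; rfl
      rw [this, List.getD_map]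
    | lvar i =>
      have hsub : substYM us (RTree.node (MLab.lvar i) ts) = .node (.lvar i) [] := by
        rw [substYM]
      rw [hsub, substYC, cov_eq, codeMT_lvar]
      simp only [stepY, Nat.unpair_pair]
      rw [if_neg (by omega), if_neg (by omega), codeMT_lvar]
      rfl

theorem substZC_codeMT (j : ℕ) (zs : List (MT Δ)) (w : MT Δ) :
    substZC j (zs.map codeMT) (codeMT w) = codeMT (substZ j zs w) := by
  induction w using RTree.ind with
  | h a ts ih =>
    cases a with
    | out d =>
      rw [substZ_out, substZC, cov_eq, codeMT_out, codeMT_out]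
      simp only [stepZ, Nat.unpair_pair]
      rw [if_pos (by omega)]
      congr 1
      rw [decList_encodeList, List.map_map, List.map_map]
      exact congrArg encodeList (List.map_congr_left fun t h => ih t h)
    | param i =>
      have hsub : substZ j zs (RTree.node (MLab.param i) ts) = .node (.param i) [] := by
        rw [substZ]
      rw [hsub, substZC, cov_eq, codeMT_param]
      simp only [stepZ, Nat.unpair_pair]
      rw [if_neg (by omega), if_pos (by omega), codeMT_param]
      rfl
    | lvar i =>
      have hsub : substZ j zs (RTree.node (MLab.lvar i) ts) =
          if j ≤ i ∧ i < j + zs.length then zs.getD (i - j) (.node (.lvar i) [])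
          else .node (.lvar i) [] := by
        rw [substZ]
      rw [hsub, substZC, cov_eq, codeMT_lvar]
      simp only [stepZ, Nat.unpair_pair]
      rw [if_neg (by omega), if_neg (by omega)]
      have hd : (3 * i + 2) / 3 = i := by omega
      rw [hd, List.length_map]
      by_cases hc : j ≤ i ∧ i < j + zs.length
      · rw [if_pos hc, if_pos hc]
        have : Nat.pair (3 * i + 2) 0 = codeMT (.node (.lvar i) ([] : List (MT Δ))) := by
          rw [codeMT_lvar]; rfl
        rw [this, List.getD_map]
      · rw [if_neg hc, if_neg hc, codeMT_lvar]
        rfl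

theorem recode3_encodeTree {α : Type} (e : α → ℕ) (t : RTree α) :
    recode3 (encodeTree e t) = encodeTree (fun a => 3 * e a) t := by
  induction t using RTree.ind with
  | h a ts ih =>
    rw [encodeTree_node, encodeTree_node, recode3, cov_eq]
    simp only [step3, Nat.unpair_pair]
    congr 1
    rw [decList_encodeList, List.map_map]
    exact congrArg encodeList (List.map_congr_left fun t h => ih t h)

theorem codeMT_embedM (t : RTree Δ) :
    codeMT (embedM t) = encodeTree (fun d => 3 * Encodable.encode d) t := by
  induction t using RTree.ind with
  | h a ts ih =>
    rw [embedM, RTree.map_node, codeMT_out, encodeTree_node]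
    congr 1
    rw [List.map_map]
    exact congrArg encodeList (List.map_congr_left fun t h => ih t h)

end Aux2

section Aux3

/-- Association-list lookup. -/
def lookupC : List (ℕ × ℕ) → ℕ → Option ℕ
  | [], _ => none
  | p :: L, l => if l = p.1 then some p.2 else lookupC L l

theorem lookupC_primrec (L : List (ℕ × ℕ)) : Primrec (lookupC L) := by
  induction L with
  | nil => exact (Primrec.const none).of_eq fun l => rfl
  | cons p L ih =>
    exact (Primrec.ite (Primrec.eq.comp Primrec.id (Primrec.const p.1))
      (Primrec.const (some p.2)) ih).of_eq fun l => rfl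

theorem lookupC_map {α : Type} (e : α → ℕ) (he : Function.Injective e) (rk : α → ℕ)
    (l : List α) (a : α) (ha : a ∈ l) :
    lookupC (l.map fun a => (e a, rk a)) (e a) = some (rk a) := by
  induction l with
  | nil => cases ha
  | cons b l ih =>
    rcases List.mem_cons.1 ha with h | h
    · subst h; simp [lookupC]
    · show (if e a = e b then _ else _) = _
      by_cases hab : e a = e b
      · rw [if_pos hab, he hab]
      · rw [if_neg hab]; exact ih h

/-- Step function of the well-formedness checker. -/
def stepW (L : List (ℕ × ℕ)) (n : ℕ) (bs : List Bool) : Bool :=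
  match lookupC L (Nat.unpair n).1 with
  | none => false
  | some k =>
    bif decide ((decList (Nat.unpair n).2).length = k) then bs.foldr (· && ·) true else false

/-- Code-level well-formedness checker. -/
def chkWf (L : List (ℕ × ℕ)) : ℕ → Bool := cov (stepW L)

theorem foldr_and_primrec : Primrec (fun bs : List Bool => bs.foldr (· && ·) true) := by
  have h : Primrec (fun bs : List Bool =>
      bs.foldr (fun b s => bif (bs, b, s).2.1 then (bs, b, s).2.2 else false) true) :=
    Primrec.list_foldr Primrec.id (Primrec.const true)
      ((Primrec.cond (Primrec.fst.comp Primrec.snd) (Primrec.snd.comp Primrec.snd)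
        (Primrec.const false)).to₂)
  apply h.of_eq
  intro bs
  induction bs with
  | nil => rfl
  | cons b l ih => simp only [List.foldr_cons, ih]; cases b <;> rfl

theorem chkWf_primrec (L : List (ℕ × ℕ)) : Primrec (chkWf L) := by
  have h : Primrec₂ fun (_ : Unit) n => cov (stepW L) n := by
    apply cov_primrec (fun (_ : Unit) => stepW L)
    have ho : Primrec (fun p : Unit × ℕ × List Bool => lookupC L (Nat.unpair p.2.1).1) :=
      (lookupC_primrec L).comp
        (Primrec.fst.comp (Primrec.unpair.comp (Primrec.fst.comp Primrec.snd)))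
    have hlen : Primrec (fun p : Unit × ℕ × List Bool =>
        (decList (Nat.unpair p.2.1).2).length) :=
      Primrec.list_length.comp (decList_primrec.comp
        (Primrec.snd.comp (Primrec.unpair.comp (Primrec.fst.comp Primrec.snd))))
    have hfold : Primrec (fun p : Unit × ℕ × List Bool => p.2.2.foldr (· && ·) true) :=
      foldr_and_primrec.comp (Primrec.snd.comp Primrec.snd)
    have hsome : Primrec₂ (fun (p : Unit × ℕ × List Bool) (k : ℕ) =>
        bif decide ((decList (Nat.unpair p.2.1).2).length = k) then
          p.2.2.foldr (· && ·) true else false) :=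
      ((Primrec.cond (Primrec.eq.comp (hlen.comp Primrec.fst) Primrec.snd).decide
        (hfold.comp Primrec.fst) (Primrec.const false)).to₂)
    exact (Primrec.option_casesOn ho (Primrec.const false) hsome).of_eq fun p => by
      simp only [stepW]
      cases lookupC L (Nat.unpair p.2.1).1 <;> rfl
  exact h.comp (Primrec.const ()) Primrec.id

theorem chkWf_correct {α : Type} (e : α → ℕ) (he : Function.Injective e) (rk : α → ℕ)
    (As : List α) (hAs : ∀ a, a ∈ As) (t : RTree α) :
    chkWf (As.map fun a => (e a, rk a)) (encodeTree e t) = true ↔ t.Wf rk := by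
  induction t using RTree.ind with
  | h a ts ih =>
    rw [encodeTree_node, chkWf, cov_eq]
    show stepW _ _ _ = true ↔ _
    rw [stepW]
    simp only [Nat.unpair_pair, lookupC_map e he rk As a (hAs a), decList_encodeList]
    have hba : ∀ c x : Bool, (bif c then x else false) = (c && x) := by decide
    rw [hba, Bool.and_eq_true, decide_eq_true_eq, List.length_map, List.map_map]
    constructor
    · rintro ⟨h1, h2⟩
      refine RTree.Wf.node h1 fun t ht => ?_
      have := (foldr_and_eq_true _).1 h2 _ (List.mem_map_of_mem ht)
      exact (ih t ht).1 this
    · rintro ⟨h1, h2⟩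
      refine ⟨h1, (foldr_and_eq_true _).2 ?_⟩
      rintro b hb
      rcases List.mem_map.1 hb with ⟨t, ht, rfl⟩
      exact (ih t ht).2 (h2 t ht)

end Aux3

section Aux4

variable {Γ Δ Q : Type} [Fintype Γ] [Fintype Q] [Encodable Γ] [Encodable Δ]

/-- The code of an input tree. -/
def codeG : RTree Γ → ℕ := encodeTree Encodable.encode

/-- An enumeration of the states. -/
noncomputable def qList : List Q := (Finset.univ : Finset Q).toList

theorem mem_qList (q : Q) : q ∈ (qList : List Q) := by
  rw [qList, Finset.mem_toList]; exact Finset.mem_univ q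

/-- The index of a state in the enumeration. -/
noncomputable def qIdx (q : Q) : ℕ :=
  letI := Classical.decEq Q
  (qList : List Q).idxOf q

theorem qList_getElem?_qIdx (q : Q) : (qList : List Q)[qIdx q]? = some q := by
  letI := Classical.decEq Q
  exact List.getElem?_idxOf (mem_qList q)

theorem getD_map_qList {β : Type} (f : Q → List β) (q : Q) :
    (((qList : List Q)).map f).getD (qIdx q) [] = f q := by
  rw [List.getD_eq_getElem?_getD, List.getElem?_map, qList_getElem?_qIdx]
  rfl

/-- An enumeration of the input alphabet. -/
noncomputable def symList : List Γ := (Finset.univ : Finset Γ).toList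

theorem mem_symList (σ : Γ) : σ ∈ (symList : List Γ) := by
  rw [symList, Finset.mem_toList]; exact Finset.mem_univ σ

/-- An enumeration of the rules. -/
noncomputable def ruleList (M : MRMTT Γ Δ Q) (q : Q) (σ : Γ) : List (MRhs Δ Q) :=
  (M.rules_fin q σ).toFinset.toList

theorem mem_ruleList (M : MRMTT Γ Δ Q) {q : Q} {σ : Γ} {r : MRhs Δ Q} :
    r ∈ ruleList M q σ ↔ r ∈ M.rules q σ := by
  rw [ruleList, Finset.mem_toList, Set.Finite.mem_toFinset]

/-- Code-level evaluation of a right-hand side, given the evaluation tables of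
the current input subtrees. -/
noncomputable def evalR : MRhs Δ Q → List (List (List (List ℕ))) → List (List ℕ)
  | .ret ws, _ => [ws.map codeMT]
  | .lett j q x us rest, tbls =>
      ((tbls.getD x []).getD (qIdx q) []).flatMap fun w =>
        (evalR rest tbls).map fun ξ =>
          ξ.map (substZC j (w.map (substYC (us.map codeMT))))

/-- The evaluation table of a node labelled `σ`, from the children's tables. -/
noncomputable def stepT (M : MRMTT Γ Δ Q) (σ : Γ) (tbls : List (List (List (List ℕ)))) :
    List (List (List ℕ)) :=
  (qList : List Q).map fun q => (ruleList M q σ).flatMap fun r => evalR r tbls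

/-- Dispatch on the label code. -/
noncomputable def stepFind (M : MRMTT Γ Δ Q) :
    List Γ → ℕ → List (List (List (List ℕ))) → List (List (List ℕ))
  | [], _, _ => []
  | σ :: L, l, tbls =>
      if l = Encodable.encode σ then stepT M σ tbls else stepFind M L l tbls

/-- The evaluation-table function: `FM M (codeG s)` lists, for each state `q`,
the codes of all value tuples of `⟨q, s⟩`. -/
noncomputable def FM (M : MRMTT Γ Δ Q) : ℕ → List (List (List ℕ)) :=
  cov (fun n tbls => stepFind M (symList : List Γ) (Nat.unpair n).1 tbls)

theorem stepFind_eq (M : MRMTT Γ Δ Q) (σ : Γ) (L : List Γ) (hσ : σ ∈ L) (tbls) :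
    stepFind M L (Encodable.encode σ) tbls = stepT M σ tbls := by
  induction L with
  | nil => cases hσ
  | cons b L ih =>
    rw [stepFind]
    by_cases hb : Encodable.encode σ = Encodable.encode b
    · rw [if_pos hb, Encodable.encode_injective hb]
    · rw [if_neg hb]
      apply ih
      rcases List.mem_cons.1 hσ with h | h
      · exact absurd (congrArg Encodable.encode h) hb
      · exact h

theorem FM_eq (M : MRMTT Γ Δ Q) (σ : Γ) (ss : List (RTree Γ)) :
    FM M (codeG (.node σ ss)) = stepT M σ (ss.map (fun u => FM M (codeG u))) := by
  rw [FM, cov_eq, codeG, encodeTree_node, Nat.unpair_pair, decList_encodeList]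
  rw [stepFind_eq M σ _ (mem_symList σ), List.map_map]
  rfl

theorem map_substYC_codeMT (us ws : List (MT Δ)) :
    (ws.map codeMT).map (substYC (us.map codeMT)) = (ws.map (substYM us)).map codeMT := by
  rw [List.map_map, List.map_map]
  exact List.map_congr_left fun w _ => substYC_codeMT us w

theorem map_substZC_codeMT (j : ℕ) (zs : List (MT Δ)) (ξs : List (MT Δ)) :
    (ξs.map codeMT).map (substZC j (zs.map codeMT)) = (ξs.map (substZ j zs)).map codeMT := by
  rw [List.map_map, List.map_map]
  exact List.map_congr_left fun w _ => substZC_codeMT j zs w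

theorem evalR_correct (M : MRMTT Γ Δ Q) (env : List (RTree Γ))
    (IH : ∀ u ∈ env, ∀ (q : Q) (v : List ℕ),
      v ∈ (FM M (codeG u)).getD (qIdx q) [] ↔
        ∃ ws, (∃ r' ∈ M.rules q u.label, SemMR M.dim M.rules u.children r' ws) ∧
          v = ws.map codeMT) :
    ∀ (r : MRhs Δ Q) (v : List ℕ),
      v ∈ evalR r (env.map (fun u => FM M (codeG u))) ↔
        ∃ ws, SemMR M.dim M.rules env r ws ∧ v = ws.map codeMT := by
  intro r
  induction r with
  | ret ws =>
    intro v
    constructor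
    · intro hv
      exact ⟨ws, SemMR.ret, List.mem_singleton.1 hv⟩
    · rintro ⟨ws', hsem, rfl⟩
      cases hsem
      exact List.mem_singleton.2 rfl
  | lett j q x us rest ih =>
    intro v
    rw [evalR, List.mem_flatMap]
    by_cases hx : x < env.length
    · have hmem : env[x] ∈ env := List.getElem_mem hx
      have htbl : (env.map (fun u => FM M (codeG u))).getD x [] = FM M (codeG env[x]) := by
        rw [List.getD_eq_getElem?_getD, List.getElem?_map, List.getElem?_eq_getElem hx]
        rfl
      constructor
      · rintro ⟨w, hw, hv⟩
        rw [htbl] at hw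
        rcases (IH _ hmem q w).1 hw with ⟨ws, ⟨r', hr', hsem⟩, rfl⟩
        rcases List.mem_map.1 hv with ⟨ξ, hξ, rfl⟩
        rcases (ih ξ).1 hξ with ⟨ξs, hsemrest, rfl⟩
        refine ⟨ξs.map (substZ j (ws.map (substYM us))), ?_, ?_⟩
        · cases he : env[x] with
          | node σu ssu =>
            refine SemMR.lett (σ := σu) (ss := ssu) (r := r') ?_ ?_ ?_ hsemrest
            · rw [List.getElem?_eq_getElem hx, he]
            · rw [he] at hr'; exact hr'
            · rw [he] at hsem; exact hsem
        · rw [map_substYC_codeMT, map_substZC_codeMT]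
      · rintro ⟨out, hsem, rfl⟩
        cases hsem with
        | lett hx' hr' hws hξ =>
          rename_i σ' ss' r' ws ξs
          have hxe : env[x] = RTree.node σ' ss' := by
            rw [List.getElem?_eq_getElem hx] at hx'
            exact Option.some_injective _ hx'
          refine ⟨ws.map codeMT, ?_, ?_⟩
          · rw [htbl]
            refine (IH _ hmem q _).2 ⟨ws, ⟨r', ?_, ?_⟩, rfl⟩
            · rw [hxe]; exact hr'
            · rw [hxe]; exact hws
          · refine List.mem_map.2 ⟨ξs.map codeMT, (ih _).2 ⟨ξs, hξ, rfl⟩, ?_⟩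
            rw [map_substYC_codeMT, map_substZC_codeMT]
    · have htbl : (env.map (fun u => FM M (codeG u))).getD x [] =
          ([] : List (List (List ℕ))) :=
        List.getD_eq_default _ _ (by rw [List.length_map]; omega)
      rw [htbl]
      constructor
      · rintro ⟨w, hw, -⟩
        simp at hw
      · rintro ⟨out, hsem, rfl⟩
        cases hsem with
        | lett hx' hr' hws hξ =>
          have := List.getElem?_eq_none (l := env) (i := x) (by omega)
          rw [this] at hx'
          cases hx'

theorem FM_correct (M : MRMTT Γ Δ Q) (s : RTree Γ) : ∀ (q : Q) (v : List ℕ),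
    v ∈ (FM M (codeG s)).getD (qIdx q) [] ↔
      ∃ ws, (∃ r ∈ M.rules q s.label, SemMR M.dim M.rules s.children r ws) ∧
        v = ws.map codeMT := by
  induction s using RTree.ind with
  | h σ ss ih =>
    intro q v
    rw [FM_eq, stepT, getD_map_qList, List.mem_flatMap]
    show _ ↔ ∃ ws, (∃ r ∈ M.rules q σ, SemMR M.dim M.rules ss r ws) ∧ _
    constructor
    · rintro ⟨r, hr, hv⟩
      rcases (evalR_correct M ss ih r v).1 hv with ⟨ws, hsem, rfl⟩
      exact ⟨ws, ⟨r, (mem_ruleList M).1 hr, hsem⟩, rfl⟩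
    · rintro ⟨ws, ⟨r, hr, hsem⟩, rfl⟩
      exact ⟨r, (mem_ruleList M).2 hr, (evalR_correct M ss ih r _).2 ⟨ws, hsem, rfl⟩⟩

end Aux4

section Aux5

variable {Γ Δ Q : Type} [Fintype Γ] [Fintype Δ] [Fintype Q] [Encodable Γ] [Encodable Δ]

theorem evalR_primrec (r : MRhs Δ Q) :
    Primrec fun tbls : List (List (List (List ℕ))) => evalR r tbls := by
  induction r with
  | ret ws => exact (Primrec.const _).of_eq fun tbls => rfl
  | lett j q x us rest ih =>
    have husC : Primrec (substYC (us.map codeMT)) :=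
      substYC_primrec.comp (Primrec.const _) Primrec.id
    have hw : Primrec fun tbls : List (List (List (List ℕ))) =>
        (tbls.getD x []).getD (qIdx q) [] :=
      (Primrec.list_getD []).comp
        ((Primrec.list_getD []).comp Primrec.id (Primrec.const x)) (Primrec.const (qIdx q))
    have hparam : Primrec fun z : ((List (List (List (List ℕ))) × List ℕ) × List ℕ) × ℕ =>
        ((j, z.1.1.2.map (substYC (us.map codeMT))) : ℕ × List ℕ) :=
      Primrec.pair (Primrec.const j)
        (Primrec.list_map (Primrec.snd.comp (Primrec.fst.comp Primrec.fst))
          ((husC.comp Primrec.snd).to₂))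
    have hg3 : Primrec₂ fun (z : (List (List (List (List ℕ))) × List ℕ) × List ℕ) (c : ℕ) =>
        substZC j (z.1.2.map (substYC (us.map codeMT))) c :=
      (substZC_primrec.comp hparam Primrec.snd).to₂
    have hg2 : Primrec₂ fun (p : List (List (List (List ℕ))) × List ℕ) (ξ : List ℕ) =>
        ξ.map (substZC j (p.2.map (substYC (us.map codeMT)))) :=
      (Primrec.list_map Primrec.snd hg3).to₂
    have hg : Primrec₂ fun (tbls : List (List (List (List ℕ)))) (w : List ℕ) =>
        (evalR rest tbls).map fun ξ =>
          ξ.map (substZC j (w.map (substYC (us.map codeMT)))) :=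
      (Primrec.list_map (ih.comp Primrec.fst) hg2).to₂
    exact (Primrec.list_flatMap hw hg).of_eq fun tbls => rfl

theorem flatMapRules_primrec (L : List (MRhs Δ Q)) :
    Primrec fun tbls : List (List (List (List ℕ))) => L.flatMap fun r => evalR r tbls := by
  induction L with
  | nil => exact (Primrec.const []).of_eq fun _ => rfl
  | cons r L ih =>
    exact (Primrec.list_append.comp (evalR_primrec r) ih).of_eq fun tbls => by
      simp [List.flatMap_cons]

theorem mapQ_primrec (M : MRMTT Γ Δ Q) (σ : Γ) (L : List Q) :
    Primrec fun tbls : List (List (List (List ℕ))) =>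
      L.map fun q => (ruleList M q σ).flatMap fun r => evalR r tbls := by
  induction L with
  | nil => exact (Primrec.const []).of_eq fun _ => rfl
  | cons q L ih =>
    exact (Primrec.list_cons.comp (flatMapRules_primrec (ruleList M q σ)) ih).of_eq
      fun tbls => by simp

theorem stepT_primrec (M : MRMTT Γ Δ Q) (σ : Γ) : Primrec (stepT M σ) :=
  (mapQ_primrec M σ qList).of_eq fun tbls => by rw [stepT]

theorem stepFind_primrec (M : MRMTT Γ Δ Q) (L : List Γ) :
    Primrec fun p : ℕ × List (List (List (List ℕ))) => stepFind M L p.1 p.2 := by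
  induction L with
  | nil => exact (Primrec.const []).of_eq fun _ => by rw [stepFind]
  | cons σ L ih =>
    exact (Primrec.ite (Primrec.eq.comp Primrec.fst (Primrec.const (Encodable.encode σ)))
      ((stepT_primrec M σ).comp Primrec.snd) ih).of_eq fun p => by rw [stepFind]

theorem FM_primrec (M : MRMTT Γ Δ Q) : Primrec (FM M) := by
  have h : Primrec₂ fun (_ : Unit) (n : ℕ) =>
      cov (fun n tbls => stepFind M (symList : List Γ) (Nat.unpair n).1 tbls) n := by
    apply cov_primrec (fun (_ : Unit) (n : ℕ) tbls =>
      stepFind M (symList : List Γ) (Nat.unpair n).1 tbls)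
    exact (stepFind_primrec M symList).comp
      (Primrec.pair
        (Primrec.fst.comp (Primrec.unpair.comp (Primrec.fst.comp Primrec.snd)))
        (Primrec.snd.comp Primrec.snd))
  exact (h.comp (Primrec.const ()) Primrec.id).of_eq fun n => by simp only [id]; rw [FM]

/-- An enumeration of the output alphabet. -/
noncomputable def dList : List Δ := (Finset.univ : Finset Δ).toList

theorem mem_dList (d : Δ) : d ∈ (dList : List Δ) := by
  rw [dList, Finset.mem_toList]; exact Finset.mem_univ d

theorem foldr_or_primrec : Primrec (fun bs : List Bool => bs.foldr (· || ·) false) := by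
  have h : Primrec (fun bs : List Bool =>
      bs.foldr (fun b s => bif (bs, b, s).2.1 then true else (bs, b, s).2.2) false) :=
    Primrec.list_foldr Primrec.id (Primrec.const false)
      ((Primrec.cond (Primrec.fst.comp Primrec.snd) (Primrec.const true)
        (Primrec.snd.comp Primrec.snd)).to₂)
  apply h.of_eq
  intro bs
  induction bs with
  | nil => rfl
  | cons b l ih => simp only [List.foldr_cons, ih]; cases b <;> rfl

/-- The decision procedure for translation membership. -/
noncomputable def decideF (M : MRMTT Γ Δ Q) : ℕ → Bool := fun n =>
  chkWf ((symList : List Γ).map fun σ => (Encodable.encode σ, M.rankΓ σ)) (Nat.unpair n).1 &&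
  (chkWf ((dList : List Δ).map fun d => (Encodable.encode d, M.rankΔ d)) (Nat.unpair n).2 &&
    (((FM M (Nat.unpair n).1).getD (qIdx M.q₀) []).map fun v =>
        decide (substZC 0 (v.map (substYC [])) (Nat.pair 2 0) = recode3 (Nat.unpair n).2)).foldr
      (· || ·) false)

theorem decideF_primrec (M : MRMTT Γ Δ Q) : Primrec (decideF M) := by
  have hba : ∀ c x : Bool, (bif c then x else false) = (c && x) := by decide
  have h1 : Primrec fun n : ℕ =>
      chkWf ((symList : List Γ).map fun σ => (Encodable.encode σ, M.rankΓ σ))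
        (Nat.unpair n).1 :=
    (chkWf_primrec _).comp (Primrec.fst.comp Primrec.unpair)
  have h2 : Primrec fun n : ℕ =>
      chkWf ((dList : List Δ).map fun d => (Encodable.encode d, M.rankΔ d)) (Nat.unpair n).2 :=
    (chkWf_primrec _).comp (Primrec.snd.comp Primrec.unpair)
  have hYCnil : Primrec (substYC []) := substYC_primrec.comp (Primrec.const []) Primrec.id
  have hlhs : Primrec fun p : ℕ × List ℕ =>
      substZC 0 (p.2.map (substYC [])) (Nat.pair 2 0) :=
    substZC_primrec.comp
      (Primrec.pair (Primrec.const 0)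
        (Primrec.list_map Primrec.snd ((hYCnil.comp Primrec.snd).to₂)))
      (Primrec.const (Nat.pair 2 0))
  have hrhs : Primrec fun p : ℕ × List ℕ => recode3 (Nat.unpair p.1).2 :=
    recode3_primrec.comp (Primrec.snd.comp (Primrec.unpair.comp Primrec.fst))
  have htbl : Primrec fun n : ℕ => (FM M (Nat.unpair n).1).getD (qIdx M.q₀) [] :=
    (Primrec.list_getD []).comp
      ((FM_primrec M).comp (Primrec.fst.comp Primrec.unpair)) (Primrec.const (qIdx M.q₀))
  have h3 : Primrec fun n : ℕ =>
      (((FM M (Nat.unpair n).1).getD (qIdx M.q₀) []).map fun v =>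
        decide (substZC 0 (v.map (substYC [])) (Nat.pair 2 0) =
          recode3 (Nat.unpair n).2)).foldr (· || ·) false :=
    foldr_or_primrec.comp
      (Primrec.list_map htbl ((Primrec.eq.comp hlhs hrhs).decide.to₂))
  exact (Primrec.cond h1 (Primrec.cond h2 h3 (Primrec.const false))
    (Primrec.const false)).of_eq fun n => by
      rw [decideF]
      rw [hba, hba]

end Aux5

section Aux6

variable {Γ Δ Q : Type} [Fintype Γ] [Fintype Δ] [Fintype Q] [Encodable Γ] [Encodable Δ]

theorem pair_two_zero : Nat.pair 2 0 = codeMT (.node (.lvar 0) ([] : List (MT Δ))) := by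
  rw [codeMT_lvar]
  norm_num
  rfl

theorem semMR_top_inv (M : MRMTT Γ Δ Q) (s : RTree Γ) (out : List (MT Δ))
    (h : SemMR M.dim M.rules [s] (.lett 0 M.q₀ 0 [] (.ret [.node (.lvar 0) []])) out) :
    ∃ (σ : Γ) (ss : List (RTree Γ)) (r : MRhs Δ Q) (ws : List (MT Δ)),
      s = .node σ ss ∧ r ∈ M.rules M.q₀ σ ∧ SemMR M.dim M.rules ss r ws ∧
        out = [substZ 0 (ws.map (substYM [])) (.node (.lvar 0) [])] := by
  cases h with
  | lett hx hr hws hξ =>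
    rename_i σ ss r ws ξs
    cases hξ
    have hs : s = RTree.node σ ss := by simpa using hx
    exact ⟨σ, ss, r, ws, hs, hr, hws, by simp⟩

theorem code_top_eq (ws : List (MT Δ)) :
    substZC 0 ((ws.map codeMT).map (substYC [])) (Nat.pair 2 0) =
      codeMT (substZ 0 (ws.map (substYM [])) (.node (.lvar 0) [])) := by
  rw [show ([] : List ℕ) = List.map codeMT ([] : List (MT Δ)) from rfl,
    map_substYC_codeMT, pair_two_zero (Δ := Δ), substZC_codeMT]

theorem recode3_codeMT_embedM (t : RTree Δ) :
    recode3 (encodeTree Encodable.encode t) = codeMT (embedM t) := by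
  rw [codeMT_embedM, recode3_encodeTree]

theorem decideF_correct (M : MRMTT Γ Δ Q) (s : RTree Γ) (t : RTree Δ) :
    (s, t) ∈ tauMR M.rankΓ M.rankΔ M.dim M.rules M.q₀ ↔
      decideF M (Nat.pair (encodeTree Encodable.encode s) (encodeTree Encodable.encode t))
        = true := by
  rw [decideF]
  simp only [Nat.unpair_pair]
  rw [Bool.and_eq_true, Bool.and_eq_true]
  rw [chkWf_correct Encodable.encode Encodable.encode_injective M.rankΓ _ mem_symList s]
  rw [chkWf_correct Encodable.encode Encodable.encode_injective M.rankΔ _ mem_dList t]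
  rw [foldr_or_eq_true]
  simp only [tauMR, Set.mem_setOf_eq]
  constructor
  · rintro ⟨hws, hwt, hsem⟩
    refine ⟨hws, hwt, ?_⟩
    rcases semMR_top_inv M s _ hsem with ⟨σ, ss, r, ws, hs, hr, hsem', hout⟩
    have hout' : embedM t = substZ 0 (ws.map (substYM [])) (.node (.lvar 0) []) := by
      have := congrArg List.head? hout
      simpa using this
    refine ⟨decide (substZC 0 ((ws.map codeMT).map (substYC [])) (Nat.pair 2 0) =
      recode3 (encodeTree Encodable.encode t)), ?_, ?_⟩
    · refine List.mem_map.2 ⟨ws.map codeMT, ?_, rfl⟩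
      refine (FM_correct M s M.q₀ (ws.map codeMT)).2 ⟨ws, ⟨r, ?_, ?_⟩, rfl⟩
      · rw [hs]; exact hr
      · rw [hs]; exact hsem'
    · rw [decide_eq_true_eq, code_top_eq, recode3_codeMT_embedM, hout']
  · rintro ⟨hws, hwt, b, hb, hbt⟩
    refine ⟨hws, hwt, ?_⟩
    rcases List.mem_map.1 hb with ⟨v, hv, rfl⟩
    rw [decide_eq_true_eq] at hbt
    rcases (FM_correct M s M.q₀ v).1 hv with ⟨ws, ⟨r, hr, hsem⟩, rfl⟩
    have heq : substZ 0 (ws.map (substYM [])) (.node (.lvar 0) []) = embedM t := by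
      apply codeMT_injective
      rw [← code_top_eq, hbt, recode3_codeMT_embedM]
    cases s with
    | node σ ss =>
      have hlet := SemMR.lett (D := M.dim) (rules := M.rules) (env := [RTree.node σ ss])
        (j := 0) (q := M.q₀) (x := 0) (us := []) (rest := .ret [.node (.lvar 0) []])
        (σ := σ) (ss := ss) (r := r) (ws := ws) (ξs := [.node (.lvar 0) []])
        rfl hr hsem SemMR.ret
      simp only [List.map_cons, List.map_nil] at hlet
      rwa [heq] at hlet

end Aux6

/-- For every multi-return macro tree transducer `M`, the
translation membership problem for `τ_{IO,M}` is decidable: the characteristic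
function of `τ_{IO,M}` is computable with respect to the fixed effective
encoding `(s,t) ↦ Nat.pair (encodeTree encode s) (encodeTree encode t)`. -/
theorem translation_membership_decidable_mr {Γ Δ Q : Type}
    [Fintype Γ] [Fintype Δ] [Fintype Q] [Encodable Γ] [Encodable Δ]
    (M : MRMTT Γ Δ Q) :
    ∃ f : ℕ → Bool, Computable f ∧
      ∀ (s : RTree Γ) (t : RTree Δ),
        (s, t) ∈ tauMR M.rankΓ M.rankΔ M.dim M.rules M.q₀ ↔
          f (Nat.pair (encodeTree Encodable.encode s)
                      (encodeTree Encodable.encode t)) = true := by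
  exact ⟨decideF M, (decideF_primrec M).to_comp, fun s t => decideF_correct M s t⟩

end MttF
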